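/- If a row vector γ and square matrix G satisfy that γ·e^{Gτ} is entrywise strictly positive for some τ > 0, then there exists λ₀ > 0 such that for all λ ≥ λ₀ with λτ an integer, the vector γ·(I + G/λ)^{λτ} is entrywise strictly positive. -/

import Mathlib

open Matrix NormedSpace Filter Finset Topology

section BanachAlg
variable {𝔸 : Type*} [NormedRing 𝔸] [NormOneClass 𝔸] [NormedAlgebra ℝ 𝔸] [CompleteSpace 𝔸]

lemma aux_norm_exp_le (B : 𝔸) : ‖exp B‖ ≤ Real.exp ‖B‖ := by
  have h := NormedSpace.exp_series_hasSum_exp' (𝕂 := ℝ) B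
  have hsum : Summable fun n : ℕ => ‖B‖ ^ n / n.factorial :=
    Real.summable_pow_div_factorial ‖B‖
  have hle : ‖exp B‖ ≤ ∑' n : ℕ, ‖B‖ ^ n / n.factorial := by
    refine h.norm_le_of_bounded (hsum.hasSum) ?_
    intro n
    rw [norm_smul, Real.norm_eq_abs, abs_of_nonneg (by positivity), div_eq_inv_mul]
    gcongr
    exact norm_pow_le B n
  calc ‖exp B‖ ≤ ∑' n : ℕ, ‖B‖ ^ n / n.factorial := hle
    _ = Real.exp ‖B‖ := by
        rw [Real.exp_eq_exp_ℝ, exp_eq_tsum_div]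

lemma aux_exp_sub_bound (B : 𝔸) :
    ‖exp B - (1 + B)‖ ≤ ‖B‖ ^ 2 * Real.exp ‖B‖ := by
  have h := NormedSpace.exp_series_hasSum_exp' (𝕂 := ℝ) B
  have h2 : HasSum (fun n : ℕ => ((n + 2).factorial⁻¹ : ℝ) • B ^ (n + 2))
      (exp B - (1 + B)) := by
    have := (hasSum_nat_add_iff' (f := fun n : ℕ => (n.factorial⁻¹ : ℝ) • B ^ n) 2).mpr h
    simpa [Finset.sum_range_succ, Nat.factorial] using this
  have hsum : Summable fun n : ℕ => ‖B‖ ^ 2 * (‖B‖ ^ n / n.factorial) :=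
    (Real.summable_pow_div_factorial ‖B‖).mul_left _
  have hle : ‖exp B - (1 + B)‖ ≤ ∑' n : ℕ, ‖B‖ ^ 2 * (‖B‖ ^ n / n.factorial) := by
    refine h2.norm_le_of_bounded hsum.hasSum ?_
    intro n
    rw [norm_smul, Real.norm_eq_abs, abs_of_nonneg (by positivity)]
    calc ((n + 2).factorial⁻¹ : ℝ) * ‖B ^ (n + 2)‖
        ≤ (n.factorial⁻¹ : ℝ) * ‖B‖ ^ (n + 2) := by
          have h1 : ((n + 2).factorial⁻¹ : ℝ) ≤ (n.factorial⁻¹ : ℝ) :=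
            inv_anti₀ (by exact_mod_cast n.factorial_pos)
              (by exact_mod_cast Nat.factorial_le (by omega))
          exact mul_le_mul h1 (norm_pow_le B (n + 2)) (norm_nonneg _) (by positivity)
      _ = ‖B‖ ^ 2 * (‖B‖ ^ n / n.factorial) := by
          rw [pow_add]; ring
  calc ‖exp B - (1 + B)‖ ≤ ∑' n : ℕ, ‖B‖ ^ 2 * (‖B‖ ^ n / n.factorial) := hle
    _ = ‖B‖ ^ 2 * ∑' n : ℕ, ‖B‖ ^ n / n.factorial := by
        rw [tsum_mul_left]
    _ = ‖B‖ ^ 2 * Real.exp ‖B‖ := by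
        rw [Real.exp_eq_exp_ℝ, exp_eq_tsum_div]

lemma aux_pow_sub (a b : 𝔸) (h : Commute a b) {C : ℝ} (hC : 0 ≤ C)
    (ha : ‖a‖ ≤ C) (hb : ‖b‖ ≤ C) (n : ℕ) (hn : 1 ≤ n) :
    ‖a ^ n - b ^ n‖ ≤ n * C ^ (n - 1) * ‖a - b‖ := by
  rw [← h.geom_sum₂_mul]
  calc ‖(∑ i ∈ Finset.range n, a ^ i * b ^ (n - 1 - i)) * (a - b)‖
      ≤ ‖∑ i ∈ Finset.range n, a ^ i * b ^ (n - 1 - i)‖ * ‖a - b‖ := norm_mul_le _ _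
    _ ≤ (n * C ^ (n - 1)) * ‖a - b‖ := by
        gcongr
        calc ‖∑ i ∈ Finset.range n, a ^ i * b ^ (n - 1 - i)‖
            ≤ ∑ i ∈ Finset.range n, ‖a ^ i * b ^ (n - 1 - i)‖ := norm_sum_le _ _
          _ ≤ ∑ i ∈ Finset.range n, C ^ (n - 1) := by
              refine Finset.sum_le_sum fun i hi => ?_
              rw [Finset.mem_range] at hi
              calc ‖a ^ i * b ^ (n - 1 - i)‖ ≤ ‖a ^ i‖ * ‖b ^ (n - 1 - i)‖ := norm_mul_le _ _
                _ ≤ C ^ i * C ^ (n - 1 - i) := by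
                    gcongr
                    · exact (norm_pow_le a i).trans (pow_le_pow_left₀ (norm_nonneg a) ha i)
                    · exact (norm_pow_le b _).trans (pow_le_pow_left₀ (norm_nonneg b) hb _)
                _ = C ^ (n - 1) := by rw [← pow_add]; congr 1; omega
          _ = n * C ^ (n - 1) := by rw [Finset.sum_const, Finset.card_range, nsmul_eq_mul]

lemma aux_tendsto (A : 𝔸) :
    Tendsto (fun n : ℕ => (1 + (n : ℝ)⁻¹ • A) ^ n) atTop (𝓝 (exp A)) := by
  rw [tendsto_iff_norm_sub_tendsto_zero]
  refine squeeze_zero' (Eventually.of_forall fun n => norm_nonneg _)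
    (g := fun n : ℕ => (‖A‖ ^ 2 * Real.exp ‖A‖) / n) ?_
    (tendsto_const_div_atTop_nhds_zero_nat _)
  filter_upwards [eventually_ge_atTop 1] with n hn
  have hnR : (0 : ℝ) < n := by exact_mod_cast hn
  have hne : (n : ℝ) ≠ 0 := ne_of_gt hnR
  set B : 𝔸 := (n : ℝ)⁻¹ • A with hB
  have hBnorm : ‖B‖ = (n : ℝ)⁻¹ * ‖A‖ := by
    rw [hB, norm_smul, Real.norm_eq_abs, abs_of_nonneg (by positivity)]
  have hBle : ‖B‖ ≤ ‖A‖ := by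
    rw [hBnorm]
    calc (n : ℝ)⁻¹ * ‖A‖ ≤ 1 * ‖A‖ :=
          mul_le_mul_of_nonneg_right (inv_le_one_of_one_le₀ (by exact_mod_cast hn))
            (norm_nonneg A)
      _ = ‖A‖ := one_mul _
  have hexpA : exp A = (exp B) ^ n := by
    letI : NormedAlgebra ℚ 𝔸 := NormedAlgebra.restrictScalars ℚ ℝ 𝔸
    rw [← NormedSpace.exp_nsmul, hB, ← Nat.cast_smul_eq_nsmul ℝ, smul_smul, mul_inv_cancel₀ hne,
      one_smul]
  have hcomm : Commute (1 + B) (exp B) := by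
    exact Commute.add_left (Commute.one_left _) ((Commute.refl B).exp_right)
  set C : ℝ := Real.exp ‖B‖ with hC
  have hC0 : 0 ≤ C := le_of_lt (Real.exp_pos _)
  have ha : ‖1 + B‖ ≤ C := by
    calc ‖1 + B‖ ≤ ‖(1 : 𝔸)‖ + ‖B‖ := norm_add_le _ _
      _ = ‖B‖ + 1 := by rw [norm_one]; ring
      _ ≤ C := Real.add_one_le_exp _
  have hb : ‖exp B‖ ≤ C := aux_norm_exp_le B
  calc ‖(1 + B) ^ n - exp A‖ = ‖(1 + B) ^ n - (exp B) ^ n‖ := by rw [hexpA]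
    _ ≤ n * C ^ (n - 1) * ‖(1 + B) - exp B‖ :=
        aux_pow_sub _ _ hcomm hC0 ha hb n hn
    _ = n * C ^ (n - 1) * ‖exp B - (1 + B)‖ := by rw [norm_sub_rev]
    _ ≤ n * C ^ (n - 1) * (‖B‖ ^ 2 * C) :=
        mul_le_mul_of_nonneg_left (aux_exp_sub_bound B) (by positivity)
    _ = n * C ^ n * ‖B‖ ^ 2 := by
        rw [show C ^ n = C ^ (n - 1) * C by rw [← pow_succ]; congr 1; omega]
        ring
    _ = (‖A‖ ^ 2 * Real.exp ‖A‖) / n := by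
        have hCn : C ^ n = Real.exp ‖A‖ := by
          rw [hC, ← Real.exp_nat_mul, hBnorm, ← mul_assoc, mul_inv_cancel₀ hne, one_mul]
        rw [hCn, hBnorm]
        field_simp

end BanachAlg

section MatrixAux

attribute [local instance] Matrix.linftyOpNormedRing Matrix.linftyOpNormedAlgebra

lemma aux_entry {u : ℕ} (M : Matrix (Fin u) (Fin u) ℝ) (a b : Fin u) : ‖M a b‖ ≤ ‖M‖ := by
  have h : ‖M a b‖₊ ≤ ‖M‖₊ := by
    rw [Matrix.linfty_opNNNorm_def]
    exact le_trans
      (Finset.single_le_sum (f := fun j => ‖M a j‖₊) (fun _ _ => zero_le) (Finset.mem_univ b))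
      (Finset.le_sup (f := fun i => ∑ j, ‖M i j‖₊) (Finset.mem_univ a))
  exact_mod_cast h

lemma aux_vecMul_bound {u : ℕ} (γ : Fin u → ℝ) (M N : Matrix (Fin u) (Fin u) ℝ) (i : Fin u) :
    |(γ ᵥ* M) i - (γ ᵥ* N) i| ≤ (∑ j, |γ j|) * ‖M - N‖ := by
  have h : (γ ᵥ* M) i - (γ ᵥ* N) i = ∑ j, γ j * (M - N) j i := by
    simp [Matrix.vecMul, dotProduct, Matrix.sub_apply, mul_sub, Finset.sum_sub_distrib]
  rw [h]
  calc |∑ j, γ j * (M - N) j i| ≤ ∑ j, |γ j * (M - N) j i| := Finset.abs_sum_le_sum_abs _ _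
    _ ≤ ∑ j, |γ j| * ‖M - N‖ := Finset.sum_le_sum fun j _ => by
        rw [abs_mul]
        exact mul_le_mul_of_nonneg_left (aux_entry (M - N) j i) (abs_nonneg _)
    _ = (∑ j, |γ j|) * ‖M - N‖ := (Finset.sum_mul _ _ _).symm

end MatrixAux

/-- If `γ e^{Gτ}` is entrywise strictly positive for some `τ > 0`, then there is `lam₀ > 0`
such that for all `λ ≥ lam₀` with `λτ` an integer, `γ (I + G/λ)^{λτ}` is entrywise positive. -/
theorem stmt5 (u : ℕ) (γ : Fin u → ℝ) (G : Matrix (Fin u) (Fin u) ℝ) (τ : ℝ) (hτ : 0 < τ)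
    (hpos : ∀ i, 0 < (γ ᵥ* NormedSpace.exp (τ • G)) i) :
    ∃ lam₀ : ℝ, 0 < lam₀ ∧ ∀ lam : ℝ, lam₀ ≤ lam → ∀ n : ℕ, (n : ℝ) = lam * τ →
      ∀ i, 0 < (γ ᵥ* (1 + lam⁻¹ • G) ^ n) i := by
  rcases Nat.eq_zero_or_pos u with hu | hu
  · subst hu
    exact ⟨1, one_pos, fun lam _ n _ i => i.elim0⟩
  haveI : Nonempty (Fin u) := Fin.pos_iff_nonempty.mp hu
  letI : NormedRing (Matrix (Fin u) (Fin u) ℝ) := Matrix.linftyOpNormedRing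
  letI : NormedAlgebra ℝ (Matrix (Fin u) (Fin u) ℝ) := Matrix.linftyOpNormedAlgebra
  set A : Matrix (Fin u) (Fin u) ℝ := τ • G with hA
  set E : Matrix (Fin u) (Fin u) ℝ := NormedSpace.exp A with hE
  have hten : Filter.Tendsto (fun n : ℕ => (1 + (n : ℝ)⁻¹ • A) ^ n) Filter.atTop (nhds E) :=
    aux_tendsto A
  have hnorm0 : Filter.Tendsto (fun k : ℕ => ‖(1 + (k : ℝ)⁻¹ • A) ^ k - E‖)
      Filter.atTop (nhds 0) := tendsto_iff_norm_sub_tendsto_zero.mp hten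
  have hcomp : ∀ i, Filter.Tendsto (fun k : ℕ => (γ ᵥ* (1 + (k : ℝ)⁻¹ • A) ^ k) i)
      Filter.atTop (nhds ((γ ᵥ* E) i)) := by
    intro i
    rw [tendsto_iff_norm_sub_tendsto_zero]
    refine squeeze_zero (fun k => norm_nonneg _)
      (g := fun k : ℕ => (∑ j, |γ j|) * ‖(1 + (k : ℝ)⁻¹ • A) ^ k - E‖)
      (fun k => aux_vecMul_bound γ _ E i) ?_
    simpa using hnorm0.const_mul (∑ j, |γ j|)
  have hev : ∀ᶠ k : ℕ in Filter.atTop, ∀ i, 0 < (γ ᵥ* (1 + (k : ℝ)⁻¹ • A) ^ k) i := by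
    rw [Filter.eventually_all]
    exact fun i => (hcomp i).eventually (eventually_gt_nhds (hpos i))
  obtain ⟨N, hN⟩ := Filter.eventually_atTop.mp hev
  refine ⟨(N + 1) / τ, by positivity, fun lam hlam n hn i => ?_⟩
  have hlam0 : 0 < lam := lt_of_lt_of_le (by positivity) hlam
  have hlamτ : (N : ℝ) + 1 ≤ lam * τ := by
    rw [div_le_iff₀ hτ] at hlam
    linarith
  have hnN : N ≤ n := by
    have h1 : (N : ℝ) ≤ (n : ℝ) := by rw [hn]; linarith
    exact_mod_cast h1
  have hne : (n : ℝ) ≠ 0 := by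
    rw [hn]
    positivity
  have hkey : lam⁻¹ • G = (n : ℝ)⁻¹ • A := by
    rw [hA, smul_smul]
    congr 1
    rw [hn]
    field_simp
  rw [hkey]
  exact hN n hnN i
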